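/- arXiv:1704.00899 — 2 statements merged into one kernel-verified Lean document; each statement's English description precedes it below -/
import Mathlib

section
/- Let G be a bipartite graph and M a maximum matching in G. Then the sets 𝓔, 𝓞, 𝓤 of even, odd, and unreachable vertices with respect to M are pairwise disjoint; that is, every vertex of G receives exactly one of the three labels. -/
open SimpleGraph

variable {V : Type*}

/-- `M` is a matching in the graph `G`: a set of edges of `G` no two of which
share a vertex. -/
def IsMatchingIn (G : SimpleGraph V) (M : Set (Sym2 V)) : Prop :=
  M ⊆ G.edgeSet ∧ ∀ e ∈ M, ∀ f ∈ M, e ≠ f → ∀ v : V, v ∈ e → v ∉ f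

/-- A vertex `v` is matched (covered) by the matching `M`. -/
def IsMatchedBy (M : Set (Sym2 V)) (v : V) : Prop :=
  ∃ e ∈ M, v ∈ e

/-- The list of edges of a path given as a list of vertices. -/
def pathEdges (p : List V) : List (Sym2 V) :=
  (p.zip p.tail).map fun q => s(q.1, q.2)

/-- `p` is an alternating path from `u` to `v` in `G` with respect to the matching `M`:
its consecutive vertices are adjacent in `G`, it repeats no vertex, and its edges
alternate between edges in `M` and edges not in `M`. -/
def IsAltPath (G : SimpleGraph V) (M : Set (Sym2 V)) (u v : V) (p : List V) : Prop :=
  p.Chain' G.Adj ∧ p.Nodup ∧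
    (pathEdges p).Chain' (fun e f => (e ∈ M ↔ f ∉ M)) ∧
    p.head? = some u ∧ p.getLast? = some v

/-- `v` is even with respect to `M`: there is an even-length alternating path from
an `M`-unmatched vertex to `v`. -/
def EvenVtx (G : SimpleGraph V) (M : Set (Sym2 V)) (v : V) : Prop :=
  ∃ u p, ¬ IsMatchedBy M u ∧ IsAltPath G M u v p ∧ Even (pathEdges p).length

/-- `v` is odd with respect to `M`: there is an odd-length alternating path from
an `M`-unmatched vertex to `v`. -/
def OddVtx (G : SimpleGraph V) (M : Set (Sym2 V)) (v : V) : Prop :=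
  ∃ u p, ¬ IsMatchedBy M u ∧ IsAltPath G M u v p ∧ Odd (pathEdges p).length

/-- `v` is unreachable with respect to `M`: there is no alternating path from any
`M`-unmatched vertex to `v`. -/
def UnreachableVtx (G : SimpleGraph V) (M : Set (Sym2 V)) (v : V) : Prop :=
  ¬ ∃ u p, ¬ IsMatchedBy M u ∧ IsAltPath G M u v p

/-- `M` is a maximum (cardinality) matching in `G`. -/
def IsMaxMatching (G : SimpleGraph V) (M : Set (Sym2 V)) : Prop :=
  IsMatchingIn G M ∧ ∀ N, IsMatchingIn G N → N.ncard ≤ M.ncard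

/-- `G` is bipartite with the two sides given by `side`. -/
def IsBipartiteWith (G : SimpleGraph V) (side : V → Bool) : Prop :=
  ∀ u v, G.Adj u v → side u ≠ side v

lemma pathEdges_length (p : List V) : (pathEdges p).length = p.length - 1 := by
  simp [pathEdges, List.length_zip, List.length_tail]

lemma pathEdges_getElem (p : List V) (i : ℕ) (h : i < (pathEdges p).length) :
    (pathEdges p)[i] = s(p[i]'(by rw [pathEdges_length] at h; omega),
      p[i+1]'(by rw [pathEdges_length] at h; omega)) := by
  simp only [pathEdges, List.getElem_map, List.getElem_zip, List.getElem_tail]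

lemma mem_pathEdges_iff (p : List V) (e : Sym2 V) :
    e ∈ pathEdges p ↔ ∃ i, ∃ h : i < (pathEdges p).length,
      e = s(p[i]'(by rw [pathEdges_length] at h; omega),
        p[i+1]'(by rw [pathEdges_length] at h; omega)) := by
  rw [List.mem_iff_getElem]
  constructor
  · rintro ⟨i, h, rfl⟩
    exact ⟨i, h, pathEdges_getElem p i h⟩
  · rintro ⟨i, h, rfl⟩
    exact ⟨i, h, (pathEdges_getElem p i h)⟩

lemma head_getElem {p : List V} {u : V} (h : p.head? = some u) :
    ∃ hp : 0 < p.length, p[0] = u := by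
  cases p with
  | nil => simp at h
  | cons a t => simp_all

lemma last_getElem {p : List V} {v : V} (h : p.getLast? = some v) :
    ∃ hp : 0 < p.length, p[p.length - 1] = v := by
  have hne : p ≠ [] := by rintro rfl; simp at h
  have := List.getLast?_eq_getLast hne
  rw [this] at h
  refine ⟨List.length_pos_iff.2 hne, ?_⟩
  rw [← List.getLast_eq_getElem hne]
  exact Option.some_injective _ h

lemma chain'_getElem {α : Type*} {R : α → α → Prop} {l : List α} (h : l.Chain' R)
    (i : ℕ) (hi : i + 1 < l.length) : R l[i] l[i+1] := by
  unfold List.Chain' at h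
  rw [List.isChain_iff_getElem] at h
  exact h i (by omega)

lemma alt_parity {G : SimpleGraph V} {M : Set (Sym2 V)} {u v : V} {p : List V}
    (hp : IsAltPath G M u v p) (hu : ¬ IsMatchedBy M u) :
    ∀ i, ∀ h : i < (pathEdges p).length, ((pathEdges p)[i] ∈ M ↔ Odd i) := by
  intro i
  induction i with
  | zero =>
    intro h
    rw [pathEdges_getElem]
    constructor
    · intro hmem
      obtain ⟨h0, hu0⟩ := head_getElem hp.2.2.2.1
      exact absurd ⟨_, hmem, by rw [← hu0]; exact Sym2.mem_mk_left _ _⟩ hu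
    · intro hodd; norm_num at hodd
  | succ n ih =>
    intro h
    have hn := ih (by omega)
    have hc := chain'_getElem hp.2.2.1 n h
    rw [Nat.odd_add_one]
    tauto

lemma side_parity {G : SimpleGraph V} {side : V → Bool} (hbip : IsBipartiteWith G side)
    {p : List V} (hc : p.Chain' G.Adj) :
    ∀ i, ∀ h : i < p.length, (side (p[i]'h) = side (p[0]'(by omega)) ↔ Even i) := by
  intro i
  induction i with
  | zero => intro h; simp
  | succ n ih =>
    intro h
    have hn := ih (by omega)
    have hadj := chain'_getElem hc n h
    have hne := hbip _ _ hadj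
    rw [Nat.even_add_one, ← hn]
    constructor
    · intro heq hsame
      exact hne (hsame.trans heq.symm) |>.elim
    · intro hne2
      rcases Bool.eq_or_eq_not (side p[n+1]) (side p[0]) with h1 | h1
      · exact h1
      · exfalso
        rcases Bool.eq_or_eq_not (side p[n]) (side p[0]) with h2 | h2
        · exact hne2 h2
        · exact hne (by rw [h1, h2])

lemma card_filter_odd (n : ℕ) : ((Finset.range n).filter (fun i => Odd i)).card = n / 2 := by
  induction n with
  | zero => simp
  | succ n ih =>
    rw [Finset.range_add_one, Finset.filter_insert]
    by_cases h : Odd n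
    · rw [if_pos h, Finset.card_insert_of_notMem (by simp)]
      have := Nat.odd_iff.1 h; omega
    · rw [if_neg h]
      have := Nat.even_iff.1 (Nat.not_odd_iff_even.1 h); omega

lemma card_filter_even (n : ℕ) : ((Finset.range n).filter (fun i => Even i)).card = (n+1) / 2 := by
  induction n with
  | zero => simp
  | succ n ih =>
    rw [Finset.range_add_one, Finset.filter_insert]
    by_cases h : Even n
    · rw [if_pos h, Finset.card_insert_of_notMem (by simp)]
      have := Nat.even_iff.1 h; omega
    · rw [if_neg h]
      have := Nat.odd_iff.1 (Nat.not_even_iff_odd.1 h); omega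

lemma gei {α : Type*} {l : List α} {i j : ℕ} (hij : i = j) (hj : j < l.length) :
    l[i]'(by omega) = l[j] := by subst hij; rfl

lemma no_augmenting [Fintype V] {G : SimpleGraph V} {M : Set (Sym2 V)}
    (hM : IsMaxMatching G M) {u v : V} {p : List V} (huv : u ≠ v)
    (hu : ¬ IsMatchedBy M u) (hv : ¬ IsMatchedBy M v) (hp : IsAltPath G M u v p) :
    False := by
  classical
  obtain ⟨h0, hp0⟩ := head_getElem hp.2.2.2.1
  obtain ⟨h0', hpl⟩ := last_getElem hp.2.2.2.2
  set n := (pathEdges p).length with hn_def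
  have hnlen : n = p.length - 1 := pathEdges_length p
  have hm2 : 2 ≤ p.length := by
    rcases Nat.lt_or_ge p.length 2 with h | h
    · exfalso
      have : p.length = 1 := by omega
      apply huv
      rw [← hp0, ← hpl, ← gei (by omega : (0:ℕ) = p.length - 1) (by omega)]
    · exact h
  have hn1 : 1 ≤ n := by omega
  have hpar := alt_parity hp hu
  -- vertex at position p.length - 1 is v
  -- last edge not in M, so n is odd
  have hnodd : Odd n := by
    by_contra hne
    have hodd : Odd (n - 1) := by
      have := Nat.even_iff.1 (Nat.not_odd_iff_even.1 hne); rw [Nat.odd_iff]; omega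
    have hmem : (pathEdges p)[n-1]'(by omega) ∈ M := (hpar (n-1) (by omega)).2 hodd
    rw [pathEdges_getElem] at hmem
    apply hv
    refine ⟨_, hmem, ?_⟩
    rw [Sym2.mem_iff]
    right
    rw [← hpl, ← gei (by omega : n - 1 + 1 = p.length - 1) (by omega)]
  -- the edge function
  set g : ℕ → Sym2 V := fun i => s(p.getD i u, p.getD (i+1) u) with hg_def
  have hg : ∀ i (h : i < n), g i = (pathEdges p)[i] := by
    intro i h
    rw [pathEdges_getElem]
    simp only [hg_def]
    rw [List.getD_eq_getElem p u (by omega), List.getD_eq_getElem p u (by omega)]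
  have hgM : ∀ i (h : i < n), (g i ∈ M ↔ Odd i) := by
    intro i h; rw [hg i h]; exact hpar i h
  have hgmem : ∀ i (h : i < n) (w : V), w ∈ g i ↔
      (w = p[i]'(by omega) ∨ w = p[i+1]'(by omega)) := by
    intro i h w
    simp only [hg_def]
    rw [List.getD_eq_getElem p u (by omega), List.getD_eq_getElem p u (by omega), Sym2.mem_iff]
  have hnd := hp.2.1
  have hg_inj : Set.InjOn g {i | i < n} := by
    intro i hi j hj hij
    simp only [Set.mem_setOf_eq] at hi hj
    rw [hg i hi, hg j hj, pathEdges_getElem, pathEdges_getElem, Sym2.eq_iff] at hij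
    rcases hij with ⟨h1, h2⟩ | ⟨h1, h2⟩
    · exact (hnd.getElem_inj_iff).1 h1
    · have e1 : i = j + 1 := (hnd.getElem_inj_iff).1 h1
      have e2 : i + 1 = j := (hnd.getElem_inj_iff).1 h2
      omega
  -- interior vertices are matched by a path edge in M
  have hinterior : ∀ t (ht0 : 0 < t) (htn : t < n), ∃ k, k < n ∧ Odd k ∧
      (p[t]'(by omega)) ∈ g k ∧ g k ∈ M := by
    intro t ht0 htn
    rcases Nat.even_or_odd t with he | ho
    · have hk : Odd (t - 1) := by rw [Nat.odd_iff]; have := Nat.even_iff.1 he; omega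
      refine ⟨t - 1, by omega, hk, ?_, (hgM _ (by omega)).2 hk⟩
      rw [hgmem _ (by omega)]
      right
      congr 1
      omega
    · refine ⟨t, htn, ho, ?_, (hgM _ htn).2 ho⟩
      rw [hgmem _ htn]
      left; rfl
  set S : Set (Sym2 V) := g '' {i | i < n} with hS_def
  have hmemS : ∀ e, e ∈ S ↔ ∃ i, i < n ∧ g i = e := by
    intro e; simp [hS_def, Set.mem_image]
  -- key: an edge of M outside S shares no vertex with any path edge
  have hMS : ∀ e, e ∈ M → e ∉ S → ∀ w, w ∈ e → ∀ j, j < n → w ∉ g j := by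
    intro e heM heS w hwe j hj hwg
    rw [hgmem j hj] at hwg
    have : ∃ t, ∃ _ : t ≤ n, w = p[t]'(by omega) := by
      rcases hwg with h | h
      · exact ⟨j, by omega, h⟩
      · exact ⟨j+1, by omega, h⟩
    obtain ⟨t, htn, hwt⟩ := this
    rcases Nat.eq_zero_or_pos t with rfl | ht0
    · exact hu ⟨e, heM, by rwa [← hp0, ← hwt]⟩
    rcases Nat.lt_or_ge t n with htlt | htge
    · obtain ⟨k, hk, hko, hwk, hkM⟩ := hinterior t ht0 htlt
      rw [← hwt] at hwk
      by_cases hek : e = g k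
      · exact heS (by rw [hek]; exact (hmemS _).2 ⟨k, hk, rfl⟩)
      · exact hM.1.2 e heM (g k) hkM hek w hwe hwk
    · have : t = n := by omega
      subst this
      apply hv
      refine ⟨e, heM, ?_⟩
      rw [hwt, gei (by omega : (n:ℕ) = p.length - 1) (by omega), hpl] at hwe
      exact hwe
  set N : Set (Sym2 V) := (M \ S) ∪ (S \ M) with hN_def
  have hSub : ∀ e ∈ S, e ∈ G.edgeSet := by
    intro e he
    obtain ⟨i, hi, rfl⟩ := (hmemS e).1 he
    have hadj := chain'_getElem hp.1 i (by omega)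
    simp only [hg_def]
    rw [List.getD_eq_getElem p u (by omega), List.getD_eq_getElem p u (by omega)]
    exact hadj
  have hNmatch : IsMatchingIn G N := by
    constructor
    · rintro e (⟨heM, -⟩ | ⟨heS, -⟩)
      · exact hM.1.1 heM
      · exact hSub e heS
    · rintro e he f hf hef w hwe hwf
      rcases he with ⟨heM, heS⟩ | ⟨heS, heM⟩
      · rcases hf with ⟨hfM, hfS⟩ | ⟨hfS, hfM⟩
        · exact hM.1.2 e heM f hfM hef w hwe hwf
        · obtain ⟨j, hj, rfl⟩ := (hmemS f).1 hfS
          exact hMS e heM heS w hwe j hj hwf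
      · rcases hf with ⟨hfM, hfS⟩ | ⟨hfS, hfM⟩
        · obtain ⟨i, hi, rfl⟩ := (hmemS e).1 heS
          exact hMS f hfM hfS w hwf i hi hwe
        · obtain ⟨i, hi, rfl⟩ := (hmemS e).1 heS
          obtain ⟨j, hj, rfl⟩ := (hmemS f).1 hfS
          have hie : Even i := by
            by_contra hio
            exact heM ((hgM i hi).2 (Nat.not_even_iff_odd.1 hio))
          have hje : Even j := by
            by_contra hjo
            exact hfM ((hgM j hj).2 (Nat.not_even_iff_odd.1 hjo))
          rw [hgmem i hi] at hwe
          rw [hgmem j hj] at hwf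
          have hij : i ≠ j := fun h => hef (by rw [h])
          have hi2 := Nat.even_iff.1 hie
          have hj2 := Nat.even_iff.1 hje
          rcases hwe with h1 | h1 <;> rcases hwf with h2 | h2 <;>
            (rw [h2] at h1; have := (hnd.getElem_inj_iff).1 h1; omega)
  -- cardinalities
  have hfin : ∀ s : Set (Sym2 V), s.Finite := fun s => Set.toFinite s
  have hdisj1 : Disjoint (M \ S) (S \ M) := by
    rw [Set.disjoint_left]; rintro a ⟨_, h⟩ ⟨h2, _⟩; exact h h2
  have hNcard : N.ncard = (M \ S).ncard + (S \ M).ncard :=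
    Set.ncard_union_eq hdisj1 (hfin _) (hfin _)
  have hMsplit : (M \ S).ncard + (M ∩ S).ncard = M.ncard := by
    rw [← Set.ncard_union_eq (by rw [Set.disjoint_left]; rintro a ⟨_, h⟩ ⟨_, h2⟩; exact h h2)
      (hfin _) (hfin _), Set.diff_union_inter]
  have hMiS : M ∩ S = g '' {i | i < n ∧ Odd i} := by
    ext e
    constructor
    · rintro ⟨heM, heS⟩
      obtain ⟨i, hi, rfl⟩ := (hmemS e).1 heS
      exact ⟨i, ⟨hi, (hgM i hi).1 heM⟩, rfl⟩
    · rintro ⟨i, ⟨hi, hio⟩, rfl⟩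
      exact ⟨(hgM i hi).2 hio, (hmemS _).2 ⟨i, hi, rfl⟩⟩
  have hSdM : S \ M = g '' {i | i < n ∧ Even i} := by
    ext e
    constructor
    · rintro ⟨heS, heM⟩
      obtain ⟨i, hi, rfl⟩ := (hmemS e).1 heS
      refine ⟨i, ⟨hi, ?_⟩, rfl⟩
      by_contra hio
      exact heM ((hgM i hi).2 (Nat.not_even_iff_odd.1 hio))
    · rintro ⟨i, ⟨hi, hie⟩, rfl⟩
      refine ⟨(hmemS _).2 ⟨i, hi, rfl⟩, ?_⟩
      intro hmem
      exact (Nat.not_even_iff_odd.2 ((hgM i hi).1 hmem)).elim hie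
  have hcard1 : (M ∩ S).ncard = n / 2 := by
    rw [hMiS, Set.ncard_image_of_injOn (hg_inj.mono (fun i hi => hi.1))]
    have : {i | i < n ∧ Odd i} = ↑((Finset.range n).filter (fun i => Odd i)) := by
      ext i; simp [Finset.mem_filter, Finset.mem_range, and_comm]
    rw [this, Set.ncard_coe_finset, card_filter_odd]
  have hcard2 : (S \ M).ncard = (n+1) / 2 := by
    rw [hSdM, Set.ncard_image_of_injOn (hg_inj.mono (fun i hi => hi.1))]
    have : {i | i < n ∧ Even i} = ↑((Finset.range n).filter (fun i => Even i)) := by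
      ext i; simp [Finset.mem_filter, Finset.mem_range, and_comm]
    rw [this, Set.ncard_coe_finset, card_filter_even]
  have hfinal := hM.2 N hNmatch
  have hno : n % 2 = 1 := Nat.odd_iff.1 hnodd
  omega

lemma bool3 {a b c : Bool} (h : a ≠ b) (h2 : c ≠ a) (h3 : c ≠ b) : False := by
  cases a <;> cases b <;> cases c <;> simp_all

lemma head?_eq_some_getElem {α : Type*} (l : List α) (h : 0 < l.length) :
    l.head? = some (l[0]) := by
  cases l with
  | nil => simp at h
  | cons a t => simp

lemma getLast?_eq_some_getElem {α : Type*} (l : List α) (h : 0 < l.length) :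
    l.getLast? = some (l[l.length - 1]) := by
  have hne : l ≠ [] := by rintro rfl; simp at h
  rw [List.getLast?_eq_getLast hne, List.getLast_eq_getElem]

lemma not_even_and_odd [Fintype V] {G : SimpleGraph V} {side : V → Bool}
    (hbip : IsBipartiteWith G side) {M : Set (Sym2 V)} (hM : IsMaxMatching G M)
    {v : V} (he : EvenVtx G M v) (ho : OddVtx G M v) : False := by
  classical
  obtain ⟨u1, p1, hu1, hp1, hev⟩ := he
  obtain ⟨u2, p2, hu2, hp2, hod⟩ := ho
  obtain ⟨h10, hp10⟩ := head_getElem hp1.2.2.2.1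
  obtain ⟨h10', hp1l⟩ := last_getElem hp1.2.2.2.2
  obtain ⟨h20, hp20⟩ := head_getElem hp2.2.2.2.1
  obtain ⟨h20', hp2l⟩ := last_getElem hp2.2.2.2.2
  have hn1 : (pathEdges p1).length = p1.length - 1 := pathEdges_length p1
  have hn2 : (pathEdges p2).length = p2.length - 1 := pathEdges_length p2
  have he1 : (p1.length - 1) % 2 = 0 := by
    have := Nat.even_iff.1 hev; omega
  have he2 : (p2.length - 1) % 2 = 1 := by
    have := Nat.odd_iff.1 hod; omega
  -- side of endpoints
  have hsv1 : side v = side u1 := by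
    have hsp := side_parity hbip hp1.1 (p1.length - 1) (by omega)
    rw [hp1l, hp10] at hsp
    exact hsp.2 (Nat.even_iff.2 he1)
  have hsv2 : side v ≠ side u2 := by
    have hsp := side_parity hbip hp2.1 (p2.length - 1) (by omega)
    rw [hp2l, hp20] at hsp
    intro hcon
    have := hsp.1 hcon
    rw [Nat.even_iff] at this
    omega
  have hss : side u1 ≠ side u2 := fun h => hsv2 (hsv1.trans h)
  have huu : u1 ≠ u2 := fun h => hss (by rw [h])
  -- minimal index of p2 hitting p1
  set P : ℕ → Prop := fun t => ∃ _ : t < p2.length, p2[t] ∈ p1 with hP_def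
  have hPex : ∃ t, P t := by
    refine ⟨p2.length - 1, by omega, ?_⟩
    rw [hp2l, ← hp1l]
    exact List.getElem_mem _
  set j := Nat.find hPex with hj_def
  obtain ⟨hjlt, hjmem⟩ := Nat.find_spec hPex
  have hjmin : ∀ t (h1 : t < j) (h2 : t < p2.length), p2[t] ∉ p1 := by
    intro t ht hlt hmem
    exact Nat.find_min hPex ht ⟨hlt, hmem⟩
  obtain ⟨i, hi, hPij⟩ := List.mem_iff_getElem.1 hjmem
  -- parities of i and j
  have hiu : side (p1[i]) = side u1 ↔ Even i := by
    have := side_parity hbip hp1.1 i hi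
    rwa [hp10] at this
  have hju : side (p2[j]) = side u2 ↔ Even j := by
    have := side_parity hbip hp2.1 j hjlt
    rwa [hp20] at this
  have hparij : i % 2 ≠ j % 2 := by
    intro hcon
    by_cases hie : Even i
    · have hje : Even j := by rw [Nat.even_iff] at *; omega
      exact hss ((hiu.2 hie).symm.trans (by rw [hPij]; exact hju.2 hje))
    · have hje : ¬ Even j := by rw [Nat.even_iff] at *; omega
      refine bool3 hss (fun h => hie (hiu.1 h)) (fun h => hje (hju.1 (by rw [← hPij]; exact h)))
  -- construct the augmenting path
  set f : ℕ → V := fun t => if t ≤ j then p2.getD t u2 else p1.getD (i - (t - j)) u2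
    with hf_def
  have hf1 : ∀ t (h : t ≤ j), f t = p2[t]'(by omega) := by
    intro t h
    simp only [hf_def]
    rw [if_pos h, List.getD_eq_getElem _ _ (by omega)]
  have hf2 : ∀ t (h1 : j ≤ t) (h2 : t ≤ i + j), f t = p1[i - (t - j)]'(by omega) := by
    intro t h1 h2
    rcases Nat.eq_or_lt_of_le h1 with h | hlt
    · subst h
      rw [hf1 j le_rfl, ← hPij]
      exact gei (by omega : i = i - (j - j)) (by omega)
    · simp only [hf_def]
      rw [if_neg (by omega), List.getD_eq_getElem _ _ (by omega)]
  set q : List V := List.ofFn (fun t : Fin (i + j + 1) => f t) with hq_def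
  have hqlen : q.length = i + j + 1 := by simp [hq_def]
  have hq_get : ∀ t (h : t < i + j + 1), q[t]'(by omega) = f t := by
    intro t h
    simp only [hq_def, List.getElem_ofFn]
  have hfadj : ∀ t (h : t < i + j), G.Adj (f t) (f (t+1)) := by
    intro t h
    by_cases hc : t + 1 ≤ j
    · rw [hf1 t (by omega), hf1 (t+1) hc]
      exact chain'_getElem hp2.1 t (by omega)
    · rw [hf2 t (by omega) (by omega), hf2 (t+1) (by omega) (by omega)]
      have hadj := (chain'_getElem hp1.1 (i - (t - j) - 1) (by omega)).symm
      rw [gei (by omega : i - (t - j) - 1 + 1 = i - (t - j)) (by omega)] at hadj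
      rw [gei (by omega : i - (t + 1 - j) = i - (t - j) - 1) (by omega)]
      exact hadj
  have hfpar : ∀ t (h : t < i + j), (s(f t, f (t+1)) ∈ M ↔ Odd t) := by
    intro t h
    by_cases hc : t + 1 ≤ j
    · rw [hf1 t (by omega), hf1 (t+1) hc, ← pathEdges_getElem p2 t (by omega)]
      exact alt_parity hp2 hu2 t (by omega)
    · rw [hf2 t (by omega) (by omega), hf2 (t+1) (by omega) (by omega), Sym2.eq_swap]
      rw [gei (by omega : i - (t - j) = (i - (t - j) - 1) + 1) (by omega)]
      rw [gei (by omega : i - (t + 1 - j) = i - (t - j) - 1) (by omega)]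
      rw [← pathEdges_getElem p1 (i - (t - j) - 1) (by omega)]
      have := alt_parity hp1 hu1 (i - (t - j) - 1) (by omega)
      rw [this, Nat.odd_iff, Nat.odd_iff]
      omega
  have hcross : ∀ t1 t2 (h1 : t1 ≤ j) (hj2 : j < t2) (h2 : t2 ≤ i + j), f t1 ≠ f t2 := by
    intro t1 t2 h1 hj2 h2 heq
    rw [hf1 t1 h1, hf2 t2 (by omega) h2] at heq
    rcases Nat.eq_or_lt_of_le h1 with rfl | hlt
    · rw [← hPij] at heq
      have := (hp1.2.1.getElem_inj_iff).1 heq.symm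
      omega
    · apply hjmin t1 hlt (by omega)
      rw [heq]
      exact List.getElem_mem (by omega)
  have hinj : ∀ t1 t2 (h1 : t1 ≤ i + j) (h2 : t2 ≤ i + j), f t1 = f t2 → t1 = t2 := by
    intro t1 t2 h1 h2 heq
    by_cases hc1 : t1 ≤ j <;> by_cases hc2 : t2 ≤ j
    · rw [hf1 t1 hc1, hf1 t2 hc2] at heq
      exact (hp2.2.1.getElem_inj_iff).1 heq
    · exact absurd heq (hcross t1 t2 hc1 (by omega) h2)
    · exact absurd heq.symm (hcross t2 t1 hc2 (by omega) h1)
    · rw [hf2 t1 (by omega) h1, hf2 t2 (by omega) h2] at heq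
      have := (hp1.2.1.getElem_inj_iff).1 heq
      omega
  have hqnd : q.Nodup := by
    rw [hq_def, List.nodup_ofFn]
    intro a b hab
    exact Fin.ext (hinj a b (by omega) (by omega) hab)
  have hqadj : q.Chain' G.Adj := by
    unfold List.Chain'
    rw [List.isChain_iff_getElem]
    intro t ht
    rw [hqlen] at ht
    rw [hq_get t (by omega), hq_get (t+1) (by omega)]
    exact hfadj t (by omega)
  have hqalt : (pathEdges q).Chain' (fun e f => (e ∈ M ↔ f ∉ M)) := by
    unfold List.Chain'
    rw [List.isChain_iff_getElem]
    intro t ht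
    rw [pathEdges_length, hqlen] at ht
    rw [pathEdges_getElem q t (by rw [pathEdges_length, hqlen]; omega),
      pathEdges_getElem q (t+1) (by rw [pathEdges_length, hqlen]; omega)]
    rw [hq_get t (by omega), hq_get (t+1) (by omega), hq_get (t+2) (by omega)]
    rw [hfpar t (by omega), hfpar (t+1) (by omega), Nat.odd_iff, Nat.odd_iff]
    omega
  have hqh : q.head? = some u2 := by
    rw [head?_eq_some_getElem q (by omega), hq_get 0 (by omega), hf1 0 (by omega), hp20]
  have hql : q.getLast? = some u1 := by
    rw [getLast?_eq_some_getElem q (by omega)]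
    have : q.length - 1 = i + j := by omega
    rw [gei this (by omega), hq_get (i+j) (by omega), hf2 (i+j) (by omega) le_rfl,
      gei (by omega : i - (i + j - j) = 0) (by omega), hp10]
  exact no_augmenting hM (Ne.symm huu) hu2 hu1 ⟨hqadj, hqnd, hqalt, hqh, hql⟩

/-- For a maximum matching `M` in a bipartite graph `G`, the sets of
even, odd and unreachable vertices are pairwise disjoint: every vertex receives
exactly one of the three labels. -/
theorem even_odd_unreachable_partition [Fintype V]
    (G : SimpleGraph V) (side : V → Bool) (hbip : IsBipartiteWith G side)
    (M : Set (Sym2 V)) (hM : IsMaxMatching G M) (v : V) :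
    (EvenVtx G M v ∧ ¬ OddVtx G M v ∧ ¬ UnreachableVtx G M v) ∨
    (¬ EvenVtx G M v ∧ OddVtx G M v ∧ ¬ UnreachableVtx G M v) ∨
    (¬ EvenVtx G M v ∧ ¬ OddVtx G M v ∧ UnreachableVtx G M v) := by
  by_cases hU : UnreachableVtx G M v
  · right; right
    refine ⟨?_, ?_, hU⟩
    · rintro ⟨u, p, h1, h2, -⟩
      exact hU ⟨u, p, h1, h2⟩
    · rintro ⟨u, p, h1, h2, -⟩
      exact hU ⟨u, p, h1, h2⟩
  · rw [UnreachableVtx, not_not] at hU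
    obtain ⟨u, p, h1, h2⟩ := hU
    rcases Nat.even_or_odd (pathEdges p).length with hpar | hpar
    · left
      refine ⟨⟨u, p, h1, h2, hpar⟩, ?_, ?_⟩
      · intro ho
        exact not_even_and_odd hbip hM ⟨u, p, h1, h2, hpar⟩ ho
      · intro hUn
        exact hUn ⟨u, p, h1, h2⟩
    · right; left
      refine ⟨?_, ⟨u, p, h1, h2, hpar⟩, ?_⟩
      · intro he
        exact not_even_and_odd hbip hM he ⟨u, p, h1, h2, hpar⟩
      · intro hUn
        exact hUn ⟨u, p, h1, h2⟩
end

section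
/- Let G be a bipartite graph and let M and N be two maximum matchings in G. Then a vertex is even (respectively odd, respectively unreachable) with respect to M if and only if it is even (respectively odd, respectively unreachable) with respect to N; that is, the partition 𝓔, 𝓞, 𝓤 is the same for all maximum matchings of G. -/
open SimpleGraph

variable {V : Type*}

lemma pathEdges_nil : pathEdges ([] : List V) = [] := rfl

lemma pathEdges_single (a : V) : pathEdges [a] = [] := rfl

lemma pathEdges_cons_cons (a b : V) (l : List V) :
    pathEdges (a :: b :: l) = s(a, b) :: pathEdges (b :: l) := rfl

lemma pathEdges_cons_head {l : List V} {b : V} (h : l.head? = some b) (a : V) :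
    pathEdges (a :: l) = s(a, b) :: pathEdges l := by
  cases l with
  | nil => simp at h
  | cons c t => simp [List.head?] at h; subst h; rfl

lemma mem_of_mem_pathEdges {l : List V} {e : Sym2 V} (he : e ∈ pathEdges l) {w : V}
    (hw : w ∈ e) : w ∈ l := by
  induction l with
  | nil => simp [pathEdges] at he
  | cons a t ih =>
    cases t with
    | nil => simp [pathEdges] at he
    | cons b r =>
      rw [pathEdges_cons_cons] at he
      rcases List.mem_cons.1 he with h | h
      · subst h; rcases Sym2.mem_iff.1 hw with h | h <;> simp [h]
      · exact List.mem_cons_of_mem _ (ih h)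

lemma pathEdges_concat {l : List V} {a : V} (h : l.getLast? = some a) (v : V) :
    pathEdges (l ++ [v]) = pathEdges l ++ [s(a, v)] := by
  induction l with
  | nil => simp at h
  | cons c t ih =>
    cases t with
    | nil =>
      simp [List.getLast?] at h; subst h; rfl
    | cons b r =>
      rw [List.getLast?_cons_cons] at h
      have : (b :: r) ++ [v] = b :: (r ++ [v]) := by simp
      rw [List.cons_append, this, pathEdges_cons_cons, ← this, ih h, pathEdges_cons_cons]
      rfl

lemma pathEdges_append {l2 : List V} {b : V} (h : l2.head? = some b) (l1 : List V) :
    pathEdges (l1 ++ l2) = pathEdges (l1 ++ [b]) ++ pathEdges l2 := by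
  induction l1 with
  | nil =>
    cases l2 with
    | nil => simp at h
    | cons c t => simp [List.head?] at h; subst h; simp [pathEdges_single]
  | cons a t ih =>
    cases t with
    | nil =>
      simp only [List.nil_append, List.singleton_append]
      rw [pathEdges_cons_head h a, pathEdges_cons_cons, pathEdges_single]
      simp
    | cons c r =>
      simp only [List.cons_append] at *
      rw [pathEdges_cons_cons, pathEdges_cons_cons, ih]
      simp

/-- Parity of an alternating chain: ends agree in `P` iff odd length. -/
lemma chain_parity {α : Type*} (P : α → Prop) :
    ∀ (l : List α) (a b : α), l.Chain' (fun e f => P e ↔ ¬ P f) → l.head? = some a →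
      l.getLast? = some b → ((P a ↔ P b) ↔ Odd l.length) := by
  intro l
  induction l with
  | nil => intro a b _ h; simp at h
  | cons e t ih =>
    intro a b hc hh hl
    obtain rfl : a = e := by simpa [eq_comm] using hh
    cases t with
    | nil =>
      obtain rfl : b = a := by simpa [List.getLast?, eq_comm] using hl
      simp
    | cons f r =>
      rw [List.getLast?_cons_cons] at hl
      unfold List.Chain' at hc; rw [List.isChain_cons_cons] at hc
      have h1 : P a ↔ ¬ P f := hc.1
      have h2 := ih f b hc.2 rfl hl
      constructor
      · intro hab
        rw [List.length_cons, Nat.odd_add_one]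
        rw [Nat.not_odd_iff_even, ← Nat.not_odd_iff_even]
        intro hodd
        have := h2.2 hodd
        tauto
      · intro hodd
        rw [List.length_cons, Nat.odd_add_one] at hodd
        by_contra hab
        exact hodd (h2.1 (by tauto))

lemma side_parity_s1 {G : SimpleGraph V} {side : V → Bool} (hbip : IsBipartiteWith G side) :
    ∀ (l : List V) (a b : V), l.Chain' G.Adj → l.head? = some a →
      l.getLast? = some b → (side a = side b ↔ Even (pathEdges l).length) := by
  intro l
  induction l with
  | nil => intro a b _ h; simp at h
  | cons e t ih =>
    intro a b hc hh hl
    obtain rfl : a = e := by simpa [eq_comm] using hh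
    cases t with
    | nil =>
      obtain rfl : b = a := by simpa [List.getLast?, eq_comm] using hl
      simp [pathEdges_single]
    | cons f r =>
      rw [List.getLast?_cons_cons] at hl
      unfold List.Chain' at hc; rw [List.isChain_cons_cons] at hc
      have h1 : side a ≠ side f := hbip _ _ hc.1
      have h2 := ih f b hc.2 rfl hl
      rw [pathEdges_cons_cons, List.length_cons, Nat.even_add_one, ← h2]
      rcases Bool.eq_false_or_eq_true (side a) with h | h <;>
        rcases Bool.eq_false_or_eq_true (side f) with h' | h' <;>
        rcases Bool.eq_false_or_eq_true (side b) with h'' | h'' <;>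
        simp [h, h', h''] at h1 ⊢

lemma matching_unique {G : SimpleGraph V} {M : Set (Sym2 V)} (hM : IsMatchingIn G M)
    {e f : Sym2 V} (he : e ∈ M) (hf : f ∈ M) {w : V} (hwe : w ∈ e) (hwf : w ∈ f) : e = f := by
  by_contra hne
  exact hM.2 e he f hf hne w hwe hwf

lemma matched_partner {M : Set (Sym2 V)} {x : V} (h : IsMatchedBy M x) :
    ∃ y, s(x, y) ∈ M := by
  obtain ⟨e, he, hx⟩ := h
  obtain ⟨y, rfl⟩ := Sym2.mem_iff_exists.1 hx
  exact ⟨y, he⟩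

/-- The only edge of a path containing the head is the first edge. -/
lemma pathEdges_head_unique {x : V} {q : List V} (hnd : (x :: q).Nodup) {e : Sym2 V}
    (he : e ∈ pathEdges (x :: q)) (hx : x ∈ e) : ∃ b, q.head? = some b ∧ e = s(x, b) := by
  cases q with
  | nil => simp [pathEdges_single] at he
  | cons b r =>
    rw [pathEdges_cons_cons] at he
    rcases List.mem_cons.1 he with h | h
    · exact ⟨b, rfl, h⟩
    · exact absurd (mem_of_mem_pathEdges h hx) (List.nodup_cons.1 hnd).1

/-- Swap step: exchange the first (non-matching) edge for the second (matching) edge. -/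
lemma swap_step [Finite V] {G : SimpleGraph V} {M : Set (Sym2 V)} (hM : IsMatchingIn G M)
    {u x1 x2 : V} (hu : ¬ IsMatchedBy M u) (he1G : G.Adj u x1)
    (he2 : s(x1, x2) ∈ M) (hux2 : u ≠ x2) :
    IsMatchingIn G (insert s(u, x1) (M \ {s(x1, x2)})) ∧
      (insert s(u, x1) (M \ {s(x1, x2)})).ncard = M.ncard ∧
      ¬ IsMatchedBy (insert s(u, x1) (M \ {s(x1, x2)})) x2 := by
  have he1M : s(u, x1) ∉ M := fun h => hu ⟨_, h, by simp⟩
  have hx1x2 : x1 ≠ x2 := fun h => by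
    have := hM.1 he2; rw [h] at this; exact (G.irrefl ((mem_edgeSet G).1 this))
  have hux1 : u ≠ x1 := G.ne_of_adj he1G
  refine ⟨⟨?_, ?_⟩, ?_, ?_⟩
  · intro e hee
    rcases Set.mem_insert_iff.1 hee with rfl | h
    · exact (mem_edgeSet G).2 he1G
    · exact hM.1 h.1
  · intro e hee f hff hne w hwe hwf
    rcases Set.mem_insert_iff.1 hee with rfl | he <;>
      rcases Set.mem_insert_iff.1 hff with rfl | hf
    · exact hne rfl
    · -- e = s(u,x1), f ∈ M \ {s(x1,x2)}
      rcases Sym2.mem_iff.1 hwe with rfl | rfl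
      · exact hu ⟨f, hf.1, hwf⟩
      · exact hf.2 (matching_unique hM hf.1 he2 hwf (by simp))
    · rcases Sym2.mem_iff.1 hwf with rfl | rfl
      · exact hu ⟨e, he.1, hwe⟩
      · exact he.2 (matching_unique hM he.1 he2 hwe (by simp))
    · exact hM.2 e he.1 f hf.1 hne w hwe hwf
  · have hfin : M.Finite := Set.toFinite M
    have h1 : s(u, x1) ∉ M \ {s(x1, x2)} := fun h => he1M h.1
    rw [Set.ncard_insert_of_notMem h1 hfin.diff,
      Set.ncard_diff_singleton_of_mem he2]
    have : 1 ≤ M.ncard := (Set.ncard_pos hfin).2 ⟨_, he2⟩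
    omega
  · rintro ⟨e, hee, hx2⟩
    rcases Set.mem_insert_iff.1 hee with rfl | he
    · rcases Sym2.mem_iff.1 hx2 with rfl | rfl
      · exact hux2 rfl
      · exact hx1x2 rfl
    · exact he.2 (matching_unique hM he.1 he2 hx2 (by simp))

lemma chain'_imp_mem {α : Type*} {R S : α → α → Prop} :
    ∀ {l : List α}, l.Chain' R → (∀ a ∈ l, ∀ b ∈ l, R a b → S a b) → l.Chain' S := by
  intro l
  induction l with
  | nil => intro _ _; exact List.isChain_nil
  | cons a t ih =>
    intro hc h
    cases t with
    | nil => exact List.isChain_singleton _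
    | cons b r =>
      unfold List.Chain' at hc ⊢; rw [List.isChain_cons_cons] at hc ⊢
      exact ⟨h a (by simp) b (by simp) hc.1,
        ih hc.2 (fun x hx y hy => h x (by simp [hx]) y (by simp [hy]))⟩

/-- Flipping an even alternating path gives a matching of equal size exposing the endpoint. -/
lemma flip_even [Finite V] {G : SimpleGraph V} :
    ∀ (n : ℕ) (M : Set (Sym2 V)) (p : List V) (u v : V), p.length = n →
      IsMatchingIn G M → ¬ IsMatchedBy M u → IsAltPath G M u v p →
      Even (pathEdges p).length →
      ∃ M', IsMatchingIn G M' ∧ M'.ncard = M.ncard ∧ ¬ IsMatchedBy M' v := by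
  intro n
  induction n using Nat.strong_induction_on with
  | _ n ih =>
    intro M p u v hlen hM hu halt heven
    obtain ⟨hadj, hnd, hchain, hhead, hlast⟩ := halt
    match p with
    | [] => simp at hhead
    | [a] =>
      obtain rfl : a = u := by simpa [eq_comm] using hhead
      obtain rfl : v = a := by simpa [List.getLast?, eq_comm] using hlast
      exact ⟨M, hM, rfl, hu⟩
    | a :: b :: t =>
      obtain rfl : a = u := by simpa [eq_comm] using hhead
      match t with
      | [] => simp [pathEdges_cons_cons, pathEdges_single, Nat.even_iff] at heven
      | x2 :: t' =>
        have he1G : G.Adj a b := (List.isChain_cons_cons.1 hadj).1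
        have he1M : s(a, b) ∉ M := fun h => hu ⟨_, h, by simp⟩
        have he2 : s(b, x2) ∈ M := by
          rw [pathEdges_cons_cons, pathEdges_cons_cons] at hchain; unfold List.Chain' at hchain; rw [List.isChain_cons_cons] at hchain
          by_contra h
          exact he1M (hchain.1.2 h)
        have hux2 : a ≠ x2 := by
          intro h; rw [List.nodup_cons] at hnd; exact hnd.1 (by simp [h])
        obtain ⟨hM1, hcard1, hx2⟩ := swap_step hM hu he1G he2 hux2
        set M1 := insert s(a, b) (M \ {s(b, x2)}) with hM1def
        have hmem : ∀ e ∈ pathEdges (x2 :: t'), (e ∈ M1 ↔ e ∈ M) := by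
          intro e he
          have hue : a ∉ e := fun h =>
            (List.nodup_cons.1 hnd).1 (by simp [mem_of_mem_pathEdges he h])
          have hbe : b ∉ e := fun h =>
            (List.nodup_cons.1 (List.nodup_cons.1 hnd).2).1 (mem_of_mem_pathEdges he h)
          constructor
          · intro h
            rcases Set.mem_insert_iff.1 h with rfl | h
            · exact absurd (by simp : a ∈ s(a,b)) hue
            · exact h.1
          · intro h
            refine Set.mem_insert_iff.2 (Or.inr ⟨h, ?_⟩)
            intro h'
            rw [Set.mem_singleton_iff.1 h'] at hbe
            exact hbe (by simp)
        have hchain' : (pathEdges (x2 :: t')).Chain' (fun e f => (e ∈ M1 ↔ f ∉ M1)) := by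
          have : (pathEdges (x2 :: t')).Chain' (fun e f => (e ∈ M ↔ f ∉ M)) := by
            rw [pathEdges_cons_cons, pathEdges_cons_cons] at hchain
            exact (hchain.tail).tail
          exact chain'_imp_mem this (fun e hee f hff h => by
            rw [hmem e hee, hmem f hff]; exact h)
        have halt' : IsAltPath G M1 x2 v (x2 :: t') :=
          ⟨(hadj.tail).tail, (List.nodup_cons.1 (List.nodup_cons.1 hnd).2).2, hchain',
            rfl, by rw [List.getLast?_cons_cons, List.getLast?_cons_cons] at hlast; exact hlast⟩
        have heven' : Even (pathEdges (x2 :: t')).length := by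
          rw [pathEdges_cons_cons, pathEdges_cons_cons] at heven
          simpa [Nat.even_add_one, Nat.even_iff, Nat.odd_iff] using heven
        obtain ⟨M', hM', hcard', hv'⟩ := ih (x2 :: t').length
          (by rw [← hlen]; simp only [List.length_cons]; omega) M1 (x2 :: t') x2 v rfl hM1 hx2 halt' heven'
        exact ⟨M', hM', by rw [hcard', hcard1], hv'⟩

/-- Flipping an augmenting path gives a strictly bigger matching. -/
lemma flip_aug [Finite V] {G : SimpleGraph V} :
    ∀ (n : ℕ) (M : Set (Sym2 V)) (p : List V) (u v : V), p.length = n →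
      IsMatchingIn G M → ¬ IsMatchedBy M u → ¬ IsMatchedBy M v → IsAltPath G M u v p →
      Odd (pathEdges p).length →
      ∃ M', IsMatchingIn G M' ∧ M'.ncard = M.ncard + 1 := by
  intro n
  induction n using Nat.strong_induction_on with
  | _ n ih =>
    intro M p u v hlen hM hu hv halt hodd
    obtain ⟨hadj, hnd, hchain, hhead, hlast⟩ := halt
    match p with
    | [] => simp at hhead
    | [a] => simp [pathEdges_single, Nat.odd_iff] at hodd
    | [a, b] =>
      obtain rfl : a = u := by simpa [eq_comm] using hhead
      obtain rfl : b = v := by simpa [List.getLast?, eq_comm] using hlast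
      have he1G : G.Adj a b := (List.isChain_cons_cons.1 hadj).1
      have he1M : s(a, b) ∉ M := fun h => hu ⟨_, h, by simp⟩
      refine ⟨insert s(a, b) M, ⟨?_, ?_⟩, ?_⟩
      · intro e hee
        rcases Set.mem_insert_iff.1 hee with rfl | h
        · exact (mem_edgeSet G).2 he1G
        · exact hM.1 h
      · intro e hee f hff hne w hwe hwf
        rcases Set.mem_insert_iff.1 hee with rfl | he <;>
          rcases Set.mem_insert_iff.1 hff with rfl | hf
        · exact hne rfl
        · rcases Sym2.mem_iff.1 hwe with rfl | rfl
          · exact hu ⟨f, hf, hwf⟩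
          · exact hv ⟨f, hf, hwf⟩
        · rcases Sym2.mem_iff.1 hwf with rfl | rfl
          · exact hu ⟨e, he, hwe⟩
          · exact hv ⟨e, he, hwe⟩
        · exact hM.2 e he f hf hne w hwe hwf
      · rw [Set.ncard_insert_of_notMem he1M (Set.toFinite M)]
    | a :: b :: x2 :: t' =>
      obtain rfl : a = u := by simpa [eq_comm] using hhead
      have he1G : G.Adj a b := (List.isChain_cons_cons.1 hadj).1
      have he1M : s(a, b) ∉ M := fun h => hu ⟨_, h, by simp⟩
      have he2 : s(b, x2) ∈ M := by
        rw [pathEdges_cons_cons, pathEdges_cons_cons] at hchain; unfold List.Chain' at hchain; rw [List.isChain_cons_cons] at hchain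
        by_contra h
        exact he1M (hchain.1.2 h)
      have hux2 : a ≠ x2 := by
        intro h; rw [List.nodup_cons] at hnd; exact hnd.1 (by simp [h])
      obtain ⟨hM1, hcard1, hx2⟩ := swap_step hM hu he1G he2 hux2
      set M1 := insert s(a, b) (M \ {s(b, x2)}) with hM1def
      have hmem : ∀ e ∈ pathEdges (x2 :: t'), (e ∈ M1 ↔ e ∈ M) := by
        intro e he
        have hue : a ∉ e := fun h =>
          (List.nodup_cons.1 hnd).1 (by simp [mem_of_mem_pathEdges he h])
        have hbe : b ∉ e := fun h =>
          (List.nodup_cons.1 (List.nodup_cons.1 hnd).2).1 (mem_of_mem_pathEdges he h)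
        constructor
        · intro h
          rcases Set.mem_insert_iff.1 h with rfl | h
          · exact absurd (by simp : a ∈ s(a,b)) hue
          · exact h.1
        · intro h
          refine Set.mem_insert_iff.2 (Or.inr ⟨h, ?_⟩)
          intro h'
          rw [Set.mem_singleton_iff.1 h'] at hbe
          exact hbe (by simp)
      have hchain' : (pathEdges (x2 :: t')).Chain' (fun e f => (e ∈ M1 ↔ f ∉ M1)) := by
        have : (pathEdges (x2 :: t')).Chain' (fun e f => (e ∈ M ↔ f ∉ M)) := by
          rw [pathEdges_cons_cons, pathEdges_cons_cons] at hchain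
          exact (hchain.tail).tail
        exact chain'_imp_mem this (fun e hee f hff h => by
          rw [hmem e hee, hmem f hff]; exact h)
      have hvx : v ∈ x2 :: t' := by
        rw [List.getLast?_cons_cons, List.getLast?_cons_cons] at hlast
        obtain ⟨h, rfl⟩ := List.mem_getLast?_eq_getLast (l := x2 :: t') (x := v) hlast
        exact List.getLast_mem h
      have hv1 : ¬ IsMatchedBy M1 v := by
        rintro ⟨e, hee, hve⟩
        rcases Set.mem_insert_iff.1 hee with rfl | he
        · rcases Sym2.mem_iff.1 hve with rfl | rfl
          · exact (List.nodup_cons.1 hnd).1 (List.mem_cons_of_mem _ hvx)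
          · exact (List.nodup_cons.1 (List.nodup_cons.1 hnd).2).1 hvx
        · exact hv ⟨e, he.1, hve⟩
      have halt' : IsAltPath G M1 x2 v (x2 :: t') :=
        ⟨(hadj.tail).tail, (List.nodup_cons.1 (List.nodup_cons.1 hnd).2).2, hchain',
          rfl, by rw [List.getLast?_cons_cons, List.getLast?_cons_cons] at hlast; exact hlast⟩
      have hodd' : Odd (pathEdges (x2 :: t')).length := by
        rw [pathEdges_cons_cons, pathEdges_cons_cons] at hodd
        simpa [Nat.odd_add_one, Nat.even_iff, Nat.odd_iff] using hodd
      obtain ⟨M', hM', hcard'⟩ := ih (x2 :: t').length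
        (by rw [← hlen]; simp only [List.length_cons]; omega) M1 (x2 :: t') x2 v rfl hM1 hx2 hv1 halt' hodd'
      exact ⟨M', hM', by rw [hcard', hcard1]⟩

/-- Invariant for the alternating walk grown backwards from `v`. -/
def GoodWalk (G : SimpleGraph V) (M M' : Set (Sym2 V)) (v : V) (p : List V) : Prop :=
  p.getLast? = some v ∧ p.Chain' G.Adj ∧ p.Nodup ∧
    (pathEdges p).Chain' (fun e f => (e ∈ M ↔ f ∉ M)) ∧
    (∀ e ∈ pathEdges p, (e ∈ M ∧ e ∉ M') ∨ (e ∈ M' ∧ e ∉ M)) ∧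
    (∀ e, (pathEdges p).getLast? = some e → e ∈ M) ∧
    (∀ z ∈ p, p.head? ≠ some z → ∃ e ∈ pathEdges p, e ∈ M ∧ z ∈ e) ∧
    (∀ z ∈ p, p.head? ≠ some z → z ≠ v → ∃ e ∈ pathEdges p, e ∈ M' ∧ z ∈ e)

lemma extend_or_finish [Finite V] {G : SimpleGraph V} {M M' : Set (Sym2 V)} {v : V}
    (hM : IsMatchingIn G M) (hM' : IsMatchingIn G M')
    (hmax' : ∀ N, IsMatchingIn G N → N.ncard ≤ M'.ncard)
    (hv : ¬ IsMatchedBy M' v) (p : List V) (hg : GoodWalk G M M' v p) :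
    EvenVtx G M v ∨ ∃ y, y ∉ p ∧ GoodWalk G M M' v (y :: p) := by
  classical
  obtain ⟨hlast, hadj, hnd, hchain, h6, hle, hcovM, hcovM'⟩ := hg
  match p with
  | [] => simp at hlast
  | [x] =>
    obtain rfl : x = v := by simpa [List.getLast?] using hlast
    by_cases hmx : IsMatchedBy M x
    · obtain ⟨y, hy⟩ := matched_partner hmx
      have hadjvy : G.Adj x y := (mem_edgeSet G).1 (hM.1 hy)
      have hyv : y ≠ x := fun h => G.irrefl (h ▸ hadjvy)
      have hyM' : s(x, y) ∉ M' := fun h => hv ⟨_, h, by simp⟩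
      refine Or.inr ⟨y, by simpa using hyv, ?_, ?_, ?_, ?_, ?_, ?_, ?_, ?_⟩
      · simp [List.getLast?]
      · exact List.isChain_pair.2 hadjvy.symm
      · simp [hyv]
      · simp only [pathEdges_cons_cons, pathEdges_single]; exact List.isChain_singleton _
      · intro e he
        simp [pathEdges_cons_cons, pathEdges_single] at he
        subst he
        rw [Sym2.eq_swap]
        exact Or.inl ⟨hy, hyM'⟩
      · intro e he
        simp [pathEdges_cons_cons, pathEdges_single, List.getLast?] at he
        subst he
        rw [Sym2.eq_swap]; exact hy
      · intro z hz hne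
        rcases (by simpa using hz : z = y ∨ z = x) with h | h
        · exact absurd (by simp [h]) hne
        · exact ⟨s(y, x), by simp [pathEdges_cons_cons, pathEdges_single],
            by rw [Sym2.eq_swap]; exact hy, by simp [h]⟩
      · intro z hz hne hzv
        rcases (by simpa using hz : z = y ∨ z = x) with h | h
        · exact absurd (by simp [h]) hne
        · exact absurd h hzv
    · -- x is unmatched by M : the trivial even path
      exact Or.inl ⟨x, [x], hmx, ⟨List.isChain_singleton _, by simp, List.isChain_nil, rfl, rfl⟩,
        by simp [pathEdges_single]⟩
  | x :: b :: q =>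
    have hxb : s(x, b) ∈ pathEdges (x :: b :: q) := by rw [pathEdges_cons_cons]; simp
    have hxnotin : x ∉ b :: q := (List.nodup_cons.1 hnd).1
    -- the edge through which the walk entered the head x
    rcases h6 _ hxb with ⟨he0M, he0M'⟩ | ⟨he0M', he0M⟩
    · -- entered by an M-edge: either an augmenting path (contradiction) or extend with M'
      by_cases hmx : IsMatchedBy M' x
      · obtain ⟨y, hy⟩ := matched_partner hmx
        have hadjxy : G.Adj x y := (mem_edgeSet G).1 (hM'.1 hy)
        have hyx : y ≠ x := fun h => G.irrefl (h ▸ hadjxy)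
        have hfe0 : s(x, y) ≠ s(x, b) := by
          intro h; exact he0M' (h ▸ hy)
        have hyv : y ≠ v := fun h => hv ⟨_, hy, by simp [h]⟩
        have hyp : y ∉ x :: b :: q := by
          intro hyin
          have hyhd : (x :: b :: q).head? ≠ some y := by simp [hyx.symm]
          obtain ⟨e, hew, heM', hye⟩ := hcovM' y hyin hyhd hyv
          have : s(x, y) = e := matching_unique hM' hy heM' (by simp) hye
          subst this
          obtain ⟨c, hc, hc2⟩ := pathEdges_head_unique hnd hew (by simp)
          have hcb : c = b := by simpa [eq_comm] using hc
          rw [hcb] at hc2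
          exact hfe0 hc2
        have hfM : s(x, y) ∉ M := by
          intro h
          exact he0M' (matching_unique hM (w := x) h he0M (by simp) (by simp) ▸ hy)
        refine Or.inr ⟨y, hyp, ?_, ?_, ?_, ?_, ?_, ?_, ?_, ?_⟩
        · rw [List.getLast?_cons_cons]; exact hlast
        · exact List.isChain_cons_cons.2 ⟨hadjxy.symm, hadj⟩
        · exact List.nodup_cons.2 ⟨hyp, hnd⟩
        · simp only [pathEdges_cons_cons] at hchain ⊢
          unfold List.Chain'; rw [List.isChain_cons_cons]
          refine ⟨?_, hchain⟩
          rw [Sym2.eq_swap]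
          simp [hfM, he0M]
        · intro e he
          rw [pathEdges_cons_cons] at he
          rcases List.mem_cons.1 he with rfl | he
          · rw [Sym2.eq_swap]; exact Or.inr ⟨hy, hfM⟩
          · exact h6 e he
        · intro e he
          simp only [pathEdges_cons_cons] at he
          rw [List.getLast?_cons_cons] at he
          exact hle e (by rw [pathEdges_cons_cons]; exact he)
        · intro z hz hne
          rcases List.mem_cons.1 hz with rfl | hz
          · simp at hne
          · by_cases hzx : z = x
            · subst hzx
              exact ⟨s(z, b), by rw [pathEdges_cons_cons]; exact List.mem_cons_of_mem _ hxb, he0M, by simp⟩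
            · obtain ⟨e, hew, h1, h2⟩ := hcovM z hz (by simpa using Ne.symm hzx)
              exact ⟨e, by rw [pathEdges_cons_cons]; exact List.mem_cons_of_mem _ hew, h1, h2⟩
        · intro z hz hne hzv
          rcases List.mem_cons.1 hz with rfl | hz
          · simp at hne
          · by_cases hzx : z = x
            · subst hzx
              exact ⟨s(z, y), by rw [pathEdges_cons_cons]; simp, hy, by simp⟩
            · obtain ⟨e, hew, h1, h2⟩ := hcovM' z hz (by simpa using Ne.symm hzx) hzv
              exact ⟨e, by rw [pathEdges_cons_cons]; exact List.mem_cons_of_mem _ hew, h1, h2⟩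
      · -- augmenting path for M' : contradiction with maximality of M'
        exfalso
        have hchainM' : (pathEdges (x :: b :: q)).Chain' (fun e f => (e ∈ M' ↔ f ∉ M')) := by
          refine chain'_imp_mem hchain ?_
          intro e hee f hff h
          rcases h6 e hee with ⟨h1, h2⟩ | ⟨h1, h2⟩ <;>
            rcases h6 f hff with ⟨h3, h4⟩ | ⟨h3, h4⟩ <;> tauto
        obtain ⟨el, hel⟩ : ∃ el, (pathEdges (x :: b :: q)).getLast? = some el := by
          rw [pathEdges_cons_cons]
          exact ⟨_, List.getLast?_eq_getLast_of_ne_nil (List.cons_ne_nil _ _)⟩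
        have helM : el ∈ M := hle el hel
        have helM' : el ∉ M' := by
          have helmem : el ∈ pathEdges (x :: b :: q) := by
            obtain ⟨h, h2⟩ := List.mem_getLast?_eq_getLast (x := el) hel
            exact h2 ▸ List.getLast_mem h
          rcases h6 el helmem with ⟨h1, h2⟩ | ⟨h1, h2⟩
          · exact h2
          · exact absurd helM h2
        have hodd : Odd (pathEdges (x :: b :: q)).length := by
          have := chain_parity (· ∈ M') (pathEdges (x :: b :: q)) s(x, b) el hchainM'
            (by rw [pathEdges_cons_cons]; rfl) hel
          rw [← this]
          simp [he0M', helM']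
        obtain ⟨N', hN', hcard⟩ := flip_aug (x :: b :: q).length M' (x :: b :: q) x v rfl
          hM' hmx hv ⟨hadj, hnd, hchainM', rfl, hlast⟩ hodd
        have := hmax' N' hN'
        omega
    · -- entered by an M'-edge: either v is even (done) or extend with an M-edge
      by_cases hmx : IsMatchedBy M x
      · obtain ⟨y, hy⟩ := matched_partner hmx
        have hadjxy : G.Adj x y := (mem_edgeSet G).1 (hM.1 hy)
        have hyx : y ≠ x := fun h => G.irrefl (h ▸ hadjxy)
        have hfe0 : s(x, y) ≠ s(x, b) := by
          intro h; exact he0M (h ▸ hy)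
        have hyp : y ∉ x :: b :: q := by
          intro hyin
          have hyhd : (x :: b :: q).head? ≠ some y := by simp [hyx.symm]
          obtain ⟨e, hew, heM, hye⟩ := hcovM y hyin hyhd
          have : s(x, y) = e := matching_unique hM hy heM (by simp) hye
          subst this
          obtain ⟨c, hc, hc2⟩ := pathEdges_head_unique hnd hew (by simp)
          have hcb : c = b := by simpa [eq_comm] using hc
          rw [hcb] at hc2
          exact hfe0 hc2
        have hfM' : s(x, y) ∉ M' := by
          intro h
          exact he0M (matching_unique hM' (w := x) h he0M' (by simp) (by simp) ▸ hy)
        refine Or.inr ⟨y, hyp, ?_, ?_, ?_, ?_, ?_, ?_, ?_, ?_⟩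
        · rw [List.getLast?_cons_cons]; exact hlast
        · exact List.isChain_cons_cons.2 ⟨hadjxy.symm, hadj⟩
        · exact List.nodup_cons.2 ⟨hyp, hnd⟩
        · simp only [pathEdges_cons_cons] at hchain ⊢
          unfold List.Chain'; rw [List.isChain_cons_cons]
          refine ⟨?_, hchain⟩
          rw [Sym2.eq_swap]
          simp [hy, he0M]
        · intro e he
          rw [pathEdges_cons_cons] at he
          rcases List.mem_cons.1 he with rfl | he
          · rw [Sym2.eq_swap]; exact Or.inl ⟨hy, hfM'⟩
          · exact h6 e he
        · intro e he
          simp only [pathEdges_cons_cons] at he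
          rw [List.getLast?_cons_cons] at he
          exact hle e (by rw [pathEdges_cons_cons]; exact he)
        · intro z hz hne
          rcases List.mem_cons.1 hz with rfl | hz
          · simp at hne
          · by_cases hzx : z = x
            · subst hzx
              exact ⟨s(z, y), by rw [pathEdges_cons_cons]; simp, hy, by simp⟩
            · obtain ⟨e, hew, h1, h2⟩ := hcovM z hz (by simpa using Ne.symm hzx)
              exact ⟨e, by rw [pathEdges_cons_cons]; exact List.mem_cons_of_mem _ hew, h1, h2⟩
        · intro z hz hne hzv
          rcases List.mem_cons.1 hz with rfl | hz
          · simp at hne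
          · by_cases hzx : z = x
            · subst hzx
              exact ⟨s(z, b), by rw [pathEdges_cons_cons]; exact List.mem_cons_of_mem _ hxb, he0M', by simp⟩
            · obtain ⟨e, hew, h1, h2⟩ := hcovM' z hz (by simpa using Ne.symm hzx) hzv
              exact ⟨e, by rw [pathEdges_cons_cons]; exact List.mem_cons_of_mem _ hew, h1, h2⟩
      · -- x is M-unmatched: p itself is an even alternating path to v
        refine Or.inl ⟨x, x :: b :: q, hmx, ⟨hadj, hnd, hchain, rfl, hlast⟩, ?_⟩
        obtain ⟨el, hel⟩ : ∃ el, (pathEdges (x :: b :: q)).getLast? = some el := by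
          rw [pathEdges_cons_cons]
          exact ⟨_, List.getLast?_eq_getLast_of_ne_nil (List.cons_ne_nil _ _)⟩
        have helM : el ∈ M := hle el hel
        have := chain_parity (· ∈ M) (pathEdges (x :: b :: q)) s(x, b) el hchain
          (by rw [pathEdges_cons_cons]; rfl) hel
        rw [← Nat.not_odd_iff_even, ← this]
        simp [he0M, helM]

lemma grow [Fintype V] {G : SimpleGraph V} {M M' : Set (Sym2 V)} {v : V}
    (hM : IsMatchingIn G M) (hM' : IsMatchingIn G M')
    (hmax' : ∀ N, IsMatchingIn G N → N.ncard ≤ M'.ncard)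
    (hv : ¬ IsMatchedBy M' v) :
    ∀ (k : ℕ) (p : List V), GoodWalk G M M' v p → Fintype.card V ≤ p.length + k →
      EvenVtx G M v := by
  classical
  intro k
  induction k with
  | zero =>
    intro p hg hcard
    rcases extend_or_finish hM hM' hmax' hv p hg with h | ⟨y, hyp, hg'⟩
    · exact h
    · have : (y :: p).length ≤ Fintype.card V :=
        List.Nodup.length_le_card hg'.2.2.1
      simp at this
      omega
  | succ k ih =>
    intro p hg hcard
    rcases extend_or_finish hM hM' hmax' hv p hg with h | ⟨y, hyp, hg'⟩
    · exact h
    · exact ih (y :: p) hg' (by simp; omega)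

lemma exposed_to_even [Fintype V] {G : SimpleGraph V} {M M' : Set (Sym2 V)} {v : V}
    (hM : IsMaxMatching G M) (hM' : IsMaxMatching G M')
    (hv : ¬ IsMatchedBy M' v) : EvenVtx G M v := by
  classical
  refine grow hM.1 hM'.1 hM'.2 hv (Fintype.card V) [v] ?_ (by simp)
  refine ⟨by simp [List.getLast?], List.isChain_singleton _, by simp, List.isChain_nil,
    by simp [pathEdges_single], by simp [pathEdges_single], ?_, ?_⟩
  · intro z hz hne
    simp at hz
    subst hz
    simp at hne
  · intro z hz hne _
    simp at hz
    subst hz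
    simp at hne

lemma even_to_exposed [Finite V] {G : SimpleGraph V} {M : Set (Sym2 V)} {v : V}
    (hM : IsMaxMatching G M) (hv : EvenVtx G M v) :
    ∃ M', IsMaxMatching G M' ∧ ¬ IsMatchedBy M' v := by
  obtain ⟨u, p, hu, halt, heven⟩ := hv
  obtain ⟨M', hM', hcard, hv'⟩ := flip_even p.length M p u v rfl hM.1 hu halt heven
  exact ⟨M', ⟨hM', fun N hN => hcard ▸ hM.2 N hN⟩, hv'⟩

lemma even_iff [Fintype V] {G : SimpleGraph V} {M N : Set (Sym2 V)} {v : V}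
    (hM : IsMaxMatching G M) (hN : IsMaxMatching G N) :
    EvenVtx G M v ↔ EvenVtx G N v := by
  constructor
  · intro h
    obtain ⟨M', hM', hv'⟩ := even_to_exposed hM h
    exact exposed_to_even hN hM' hv'
  · intro h
    obtain ⟨M', hM', hv'⟩ := even_to_exposed hN h
    exact exposed_to_even hM hM' hv'

lemma pathEdges_getLast_mem {q : List V} {x : V} {e : Sym2 V} (hx : q.getLast? = some x)
    (he : (pathEdges q).getLast? = some e) : x ∈ e := by
  rcases List.eq_nil_or_concat q with rfl | ⟨L, b, rfl⟩
  · simp at hx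
  · simp only [List.concat_eq_append] at hx he
    have hbx : x = b := by simpa [List.getLast?_concat, eq_comm] using hx
    subst hbx
    rcases List.eq_nil_or_concat L with rfl | ⟨L', a, rfl⟩
    · simp [pathEdges_single] at he
    · simp only [List.concat_eq_append] at he
      have hL : (L' ++ [a]).getLast? = some a := by simp [List.getLast?_concat]
      rw [pathEdges_concat hL] at he
      rw [List.getLast?_concat] at he
      obtain rfl : e = s(a, x) := by simpa [eq_comm] using he
      simp

lemma pathEdges_head_mem {u c : V} {r : List V} :
    (pathEdges (u :: c :: r)).head? = some s(u, c) := by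
  rw [pathEdges_cons_cons]; rfl

/-- From an odd vertex, extract an even neighbour. -/
lemma odd_to_even_adj {G : SimpleGraph V} {M : Set (Sym2 V)} {v : V}
    (hv : OddVtx G M v) : ∃ x, EvenVtx G M x ∧ G.Adj x v := by
  obtain ⟨u, p, hu, ⟨hadj, hnd, hchain, hhead, hlast⟩, hodd⟩ := hv
  rcases List.eq_nil_or_concat p with rfl | ⟨q, b, rfl⟩
  · simp at hhead
  · simp only [List.concat_eq_append] at hadj hnd hchain hhead hlast hodd
    have hbv : v = b := by simpa [List.getLast?_concat, eq_comm] using hlast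
    subst hbv
    rcases List.eq_nil_or_concat q with rfl | ⟨L, x, rfl⟩
    · simp [pathEdges_single, Nat.odd_iff] at hodd
    · simp only [List.concat_eq_append] at hadj hnd hchain hhead hodd
      have hqlast : (L ++ [x]).getLast? = some x := by simp [List.getLast?_concat]
      have hpe : pathEdges ((L ++ [x]) ++ [v]) = pathEdges (L ++ [x]) ++ [s(x, v)] :=
        pathEdges_concat hqlast v
      have hchainq : (pathEdges (L ++ [x])).Chain' (fun e f => (e ∈ M ↔ f ∉ M)) := by
        rw [hpe] at hchain
        exact (List.isChain_append.1 hchain).1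
      have hadjq : (L ++ [x]).Chain' G.Adj := (List.isChain_append.1 hadj).1
      have hadjxv : G.Adj x v := by
        have := (List.isChain_append.1 hadj).2.2
        exact this x (by simp [hqlast]) v rfl
      have hndq : (L ++ [x]).Nodup := (List.nodup_append.1 hnd).1
      have hheadq : (L ++ [x]).head? = some u := by
        rcases L with _ | ⟨a, L'⟩
        · simpa using hhead
        · simpa using hhead
      have heven : Even (pathEdges (L ++ [x])).length := by
        rw [hpe, List.length_append] at hodd
        simpa [Nat.odd_add_one] using hodd
      exact ⟨x, ⟨u, L ++ [x], hu, ⟨hadjq, hndq, hchainq, hheadq, hqlast⟩, heven⟩, hadjxv⟩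

/-- In a bipartite graph, a neighbour of an even vertex is odd. -/
lemma even_adj_to_odd {G : SimpleGraph V} {side : V → Bool}
    (hbip : IsBipartiteWith G side) {M : Set (Sym2 V)} (hM : IsMatchingIn G M) {x v : V}
    (hx : EvenVtx G M x) (hadj : G.Adj x v) : OddVtx G M v := by
  classical
  obtain ⟨u, q, hu, ⟨hadjq, hndq, hchainq, hheadq, hlastq⟩, heven⟩ := hx
  have hsideux : side u = side x :=
    (side_parity_s1 hbip q u x hadjq hheadq hlastq).2 heven
  have hsideuv : side u ≠ side v := by
    rw [hsideux]
    exact hbip _ _ hadj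
  by_cases hvq : v ∈ q
  · -- v occurs on the path: take the prefix ending at v
    obtain ⟨q1, q2, rfl⟩ := List.append_of_mem hvq
    have hassoc : q1 ++ v :: q2 = (q1 ++ [v]) ++ q2 := by simp
    have hheadp : (q1 ++ [v]).head? = some u := by
      rcases q1 with _ | ⟨a, t⟩
      · simpa using hheadq
      · simpa using hheadq
    have hlastp : (q1 ++ [v]).getLast? = some v := by simp [List.getLast?_concat]
    have hadjp : (q1 ++ [v]).Chain' G.Adj := by
      rw [hassoc] at hadjq
      exact (List.isChain_append.1 hadjq).1
    have hndp : (q1 ++ [v]).Nodup := by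
      rw [hassoc] at hndq
      exact (List.nodup_append.1 hndq).1
    have hchainp : (pathEdges (q1 ++ [v])).Chain' (fun e f => (e ∈ M ↔ f ∉ M)) := by
      rw [pathEdges_append (l2 := v :: q2) rfl q1] at hchainq
      exact (List.isChain_append.1 hchainq).1
    have hodd : Odd (pathEdges (q1 ++ [v])).length := by
      rw [← Nat.not_even_iff_odd]
      intro hev
      exact hsideuv ((side_parity_s1 hbip (q1 ++ [v]) u v hadjp hheadp hlastp).2 hev)
    exact ⟨u, q1 ++ [v], hu, ⟨hadjp, hndp, hchainp, hheadp, hlastp⟩, hodd⟩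
  · -- v is a new vertex: extend the path by the edge from x
    have hq : q ≠ [] := by rintro rfl; simp at hheadq
    have hlastM : ∀ el, (pathEdges q).getLast? = some el → el ∈ M := by
      intro el hel
      rcases q with _ | ⟨a, t⟩
      · simp at hq
      · have hau : a = u := by simpa using hheadq
        subst hau
        rcases t with _ | ⟨c, r⟩
        · simp [pathEdges_single] at hel
        · have hpar := chain_parity (· ∈ M) (pathEdges (a :: c :: r)) s(a, c) el hchainq
            pathEdges_head_mem hel
          have hacM : s(a, c) ∉ M := fun h => hu ⟨_, h, by simp⟩
          by_contra helM
          rw [← Nat.not_odd_iff_even] at heven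
          exact heven (hpar.1 (by simp [hacM, helM]))
    have hxv : s(x, v) ∉ M := by
      intro hxvM
      rcases q with _ | ⟨a, t⟩
      · simp at hq
      · have hau : a = u := by simpa using hheadq
        subst hau
        rcases t with _ | ⟨c, r⟩
        · have hax : a = x := by simpa using hlastq
          exact hu ⟨_, hxvM, by simp [← hax]⟩
        · obtain ⟨el, hel⟩ : ∃ el, (pathEdges (a :: c :: r)).getLast? = some el :=
            ⟨_, List.getLast?_eq_getLast_of_ne_nil (by rw [pathEdges_cons_cons]; simp)⟩
          have helM : el ∈ M := hlastM el hel
          have hxel : x ∈ el := pathEdges_getLast_mem hlastq hel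
          have heq : s(x, v) = el := matching_unique hM hxvM helM (by simp) hxel
          have helmem : el ∈ pathEdges (a :: c :: r) := by
            obtain ⟨h, h2⟩ := List.mem_getLast?_eq_getLast (x := el) hel
            exact h2 ▸ List.getLast_mem h
          have hvel : v ∈ el := by rw [← heq]; simp
          exact hvq (mem_of_mem_pathEdges helmem hvel)
    have hlastp : (q ++ [v]).getLast? = some v := by simp [List.getLast?_concat]
    have hheadp : (q ++ [v]).head? = some u := by
      rcases q with _ | ⟨a, t⟩
      · simp at hq
      · simpa using hheadq
    have hadjp : (q ++ [v]).Chain' G.Adj := by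
      unfold List.Chain'; rw [List.isChain_append]
      refine ⟨hadjq, by simp, ?_⟩
      intro a ha b hb
      obtain rfl : v = b := by simpa [eq_comm] using hb
      have hxa : x = a := by rw [hlastq] at ha; simpa [eq_comm] using ha
      rw [← hxa]
      exact hadj
    have hndp : (q ++ [v]).Nodup := by
      rw [List.nodup_append]
      exact ⟨hndq, by simp, by intro a ha b hb; simp at hb; subst hb; rintro rfl; exact hvq ha⟩
    have hchainp : (pathEdges (q ++ [v])).Chain' (fun e f => (e ∈ M ↔ f ∉ M)) := by
      rw [pathEdges_concat hlastq]
      unfold List.Chain'; rw [List.isChain_append]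
      refine ⟨hchainq, by simp, ?_⟩
      intro e he f hf
      obtain rfl : f = s(x, v) := by simpa [eq_comm] using hf
      have heM : e ∈ M := hlastM e (Option.mem_def.mp he)
      simp [heM, hxv]
    have hodd : Odd (pathEdges (q ++ [v])).length := by
      rw [← Nat.not_even_iff_odd]
      intro hev
      exact hsideuv ((side_parity_s1 hbip (q ++ [v]) u v hadjp hheadp hlastp).2 hev)
    exact ⟨u, q ++ [v], hu, ⟨hadjp, hndp, hchainp, hheadp, hlastp⟩, hodd⟩

lemma odd_iff [Fintype V] {G : SimpleGraph V} {side : V → Bool}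
    (hbip : IsBipartiteWith G side) {M N : Set (Sym2 V)} {v : V}
    (hM : IsMaxMatching G M) (hN : IsMaxMatching G N) :
    OddVtx G M v ↔ OddVtx G N v := by
  constructor
  · intro h
    obtain ⟨x, hxeven, hxadj⟩ := odd_to_even_adj h
    exact even_adj_to_odd hbip hN.1 ((even_iff hM hN).1 hxeven) hxadj
  · intro h
    obtain ⟨x, hxeven, hxadj⟩ := odd_to_even_adj h
    exact even_adj_to_odd hbip hM.1 ((even_iff hM hN).2 hxeven) hxadj

lemma unreachable_iff_not_even_not_odd {G : SimpleGraph V} {M : Set (Sym2 V)} {v : V} :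
    UnreachableVtx G M v ↔ ¬ EvenVtx G M v ∧ ¬ OddVtx G M v := by
  constructor
  · intro h
    exact ⟨fun ⟨u, p, h1, h2, _⟩ => h ⟨u, p, h1, h2⟩,
      fun ⟨u, p, h1, h2, _⟩ => h ⟨u, p, h1, h2⟩⟩
  · rintro ⟨h1, h2⟩ ⟨u, p, hu, hp⟩
    rcases Nat.even_or_odd (pathEdges p).length with he | ho
    · exact h1 ⟨u, p, hu, hp, he⟩
    · exact h2 ⟨u, p, hu, hp, ho⟩

/-- The partition into even, odd and unreachable vertices is the same
for all maximum matchings of a bipartite graph. -/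
theorem labels_same_for_all_max_matchings [Fintype V]
    (G : SimpleGraph V) (side : V → Bool) (hbip : IsBipartiteWith G side)
    (M N : Set (Sym2 V)) (hM : IsMaxMatching G M) (hN : IsMaxMatching G N) (v : V) :
    (EvenVtx G M v ↔ EvenVtx G N v) ∧
    (OddVtx G M v ↔ OddVtx G N v) ∧
    (UnreachableVtx G M v ↔ UnreachableVtx G N v) := by
  refine ⟨even_iff hM hN, odd_iff hbip hM hN, ?_⟩
  rw [unreachable_iff_not_even_not_odd, unreachable_iff_not_even_not_odd,
    even_iff hM hN (v := v), odd_iff hbip hM hN (v := v)]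
end
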